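/- Consider a finite-horizon Markov decision process with finite state space 𝒮, finite action space 𝒜, horizon T ≥ 1, deterministic initial state s₁ ∈ 𝒮, transition kernel p : 𝒮 × 𝒜 → 𝒮 → ℝ (with p(s,a) a probability mass function on 𝒮 for every (s,a)), deterministic reward r : 𝒮 × 𝒜 → ℝ, and a policy π : ℝ^k → 𝒮 → 𝒜 → ℝ such that for each s ∈ 𝒮: π(θ)(s) is a probability mass function on 𝒜, π(θ)(s)(a) > 0, and θ ↦ π(θ)(s)(a) is differentiable at θ₀ for all a. Let J(θ) := E_θ[∑_{t=1}^T r(s_t, a_t)] denote the expected total reward, where the expectation is the finite sum over all trajectories (a₁, s₂, a₂, …, s_T, a_T) weighted by ∏_t π(θ)(s_t)(a_t) p(s_t, a_t)(s_{t+1}). Then ∇J(θ₀) = E_{θ₀}[ ∑_{j=1}^T ( ∑_{t=j}^T r(s_t, a_t) ) · ∇_θ log π(θ)(s_j)(a_j)|_{θ₀} ]. -/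

import Mathlib

open Real Finset

section PG
set_option linter.unusedSectionVars false
set_option maxHeartbeats 1000000
variable {S A E : Type*} [Fintype S] [Fintype A] [DecidableEq S]
  [AddCommGroup E] [Module ℝ E]
variable (q : S → A → ℝ) (p : S → A → S → ℝ) (D : S → A → E)

lemma prod_erase_zero {M : Type*} [CommMonoid M] {n : ℕ} (f : Fin (n+1) → M) :
    ∏ t ∈ (univ : Finset (Fin (n+1))).erase 0, f t = ∏ t : Fin n, f t.succ := by
  rw [Fin.univ_succ, Finset.erase_cons, Finset.prod_map]
  congr 1

lemma prod_erase_succ {M : Type*} [CommMonoid M] {n : ℕ} (j : Fin n) (f : Fin (n+1) → M) :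
    ∏ t ∈ (univ : Finset (Fin (n+1))).erase j.succ, f t =
      f 0 * ∏ t ∈ (univ : Finset (Fin n)).erase j, f t.succ := by
  rw [Fin.univ_succ, Finset.erase_cons_of_ne (by simp [Finset.mem_map]) (Fin.succ_ne_zero j).symm,
    Finset.prod_cons,
    show j.succ = (⟨Fin.succ, Fin.succ_injective _⟩ : Fin n ↪ Fin (n+1)) j from rfl,
    ← Finset.map_erase, Finset.prod_map]
  congr 1

lemma sum_fun_succ {X M : Type*} [Fintype X] [AddCommMonoid M] {n : ℕ}
    (g : (Fin (n+1) → X) → M) :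
    ∑ f : Fin (n+1) → X, g f = ∑ x : X, ∑ f : Fin n → X, g (Fin.cons x f) := by
  rw [← (Fin.consEquiv (fun _ : Fin (n+1) => X)).sum_comp g, Fintype.sum_prod_type]
  rfl

def W {n : ℕ} (σ : Fin (n+1) → S) (α : Fin n → A) : ℝ :=
  ∏ t : Fin n, (q (σ t.castSucc) (α t) * p (σ t.castSucc) (α t) (σ t.succ))

lemma W_zero (σ : Fin 1 → S) (α : Fin 0 → A) : W q p σ α = 1 := by
  simp [W]

lemma W_succ {n : ℕ} (σ : Fin (n+2) → S) (α : Fin (n+1) → A) :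
    W q p σ α = (q (σ 0) (α 0) * p (σ 0) (α 0) (σ 1)) *
      W q p (Fin.tail σ) (Fin.tail α) := by
  simp only [W]
  rw [Fin.prod_univ_succ]
  congr 1

lemma marginal_start {M : Type*} [AddCommMonoid M] [Module ℝ M] {n : ℕ}
    (f : S → ℝ) (g : (Fin (n+1) → S) → (Fin n → A) → M) :
    ∑ σ : Fin (n+1) → S, ∑ α : Fin n → A, f (σ 0) • g σ α
      = ∑ s' : S, ∑ σ : Fin (n+1) → S, ∑ α : Fin n → A,
          ((if σ 0 = s' then (1:ℝ) else 0) * f s') • g σ α := by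
  symm
  rw [Finset.sum_comm]
  refine Finset.sum_congr rfl fun σ _ => ?_
  rw [Finset.sum_comm]
  refine Finset.sum_congr rfl fun α _ => ?_
  simp [ite_mul, ite_smul, Finset.sum_ite_eq]

lemma lemA (hq : ∀ s, ∑ a, q s a = 1) (hp : ∀ s a, ∑ s', p s a s' = 1) :
    ∀ (n : ℕ) (s : S), ∑ σ : Fin (n+1) → S, ∑ α : Fin n → A,
      (if σ 0 = s then (1:ℝ) else 0) * W q p σ α = 1 := by
  intro n
  induction n with
  | zero =>
      intro s
      rw [sum_fun_succ]
      simp [W_zero]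
  | succ n ih =>
      intro s
      rw [sum_fun_succ]
      have key : ∀ x : S, ∑ σ : Fin (n+1) → S, ∑ α : Fin (n+1) → A,
          (if (Fin.cons x σ : Fin (n+2) → S) 0 = s then (1:ℝ) else 0) *
            W q p (Fin.cons x σ) α
          = (if x = s then (1:ℝ) else 0) := by
        intro x
        -- split each α via cons
        have : ∀ σ : Fin (n+1) → S, ∑ α : Fin (n+1) → A,
            (if x = s then (1:ℝ) else 0) * W q p (Fin.cons x σ) α
            = ∑ a : A, ∑ α : Fin n → A, (if x = s then (1:ℝ) else 0) *
              ((q x a * p x a (σ 0)) * W q p σ α) := by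
          intro σ
          rw [sum_fun_succ]
          refine Finset.sum_congr rfl fun a _ => Finset.sum_congr rfl fun α _ => ?_
          rw [W_succ]
          rfl
        simp only [Fin.cons_zero]
        rw [Finset.sum_congr rfl fun σ _ => this σ]
        rcases eq_or_ne x s with hx | hx
        · subst hx
          simp only [eq_self_iff_true, if_true, one_mul]
          rw [Finset.sum_comm]
          have inner : ∀ a : A, ∑ σ : Fin (n+1) → S, ∑ α : Fin n → A,
              (q x a * p x a (σ 0)) * W q p σ α = q x a := by
            intro a
            have hm := marginal_start (A := A) (f := fun s' => p x a s')
              (g := fun (σ : Fin (n+1) → S) (α : Fin n → A) => W q p σ α)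
            simp only [smul_eq_mul] at hm
            calc ∑ σ : Fin (n+1) → S, ∑ α : Fin n → A,
                  (q x a * p x a (σ 0)) * W q p σ α
                = q x a * ∑ σ : Fin (n+1) → S, ∑ α : Fin n → A,
                    p x a (σ 0) * W q p σ α := by
                  simp only [Finset.mul_sum]; congr 1; ext σ; congr 1; ext α; ring
              _ = q x a * ∑ s' : S, ∑ σ : Fin (n+1) → S, ∑ α : Fin n → A,
                    ((if σ 0 = s' then (1:ℝ) else 0) * p x a s') * W q p σ α := by
                  rw [hm]
              _ = q x a * ∑ s' : S, p x a s' * ∑ σ : Fin (n+1) → S, ∑ α : Fin n → A,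
                    (if σ 0 = s' then (1:ℝ) else 0) * W q p σ α := by
                  congr 1; refine Finset.sum_congr rfl fun s' _ => ?_
                  simp only [Finset.mul_sum]
                  refine Finset.sum_congr rfl fun σ _ => Finset.sum_congr rfl fun α _ => ?_
                  ring
              _ = q x a := by
                  simp only [fun s' => ih s', mul_one, hp x a]
          rw [Finset.sum_congr rfl fun a _ => inner a, hq x]
        · simp [hx]
      rw [Finset.sum_congr rfl fun x _ => key x]
      simp

lemma lemA' (hq : ∀ s, ∑ a, q s a = 1) (hp : ∀ s a, ∑ s', p s a s' = 1)
    (n : ℕ) (s : S) (a : A) :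
    ∑ σ : Fin (n+1) → S, ∑ α : Fin n → A, p s a (σ 0) * W q p σ α = 1 := by
  have hm := marginal_start (A := A) (f := fun s' => p s a s')
    (g := fun (σ : Fin (n+1) → S) (α : Fin n → A) => W q p σ α)
  simp only [smul_eq_mul] at hm
  rw [hm]
  calc ∑ s' : S, ∑ σ : Fin (n+1) → S, ∑ α : Fin n → A,
        ((if σ 0 = s' then (1:ℝ) else 0) * p s a s') * W q p σ α
      = ∑ s' : S, p s a s' * ∑ σ : Fin (n+1) → S, ∑ α : Fin n → A,
          (if σ 0 = s' then (1:ℝ) else 0) * W q p σ α := by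
        refine Finset.sum_congr rfl fun s' _ => ?_
        simp only [Finset.mul_sum]
        exact Finset.sum_congr rfl fun σ _ => Finset.sum_congr rfl fun α _ => by ring
    _ = 1 := by
        simp only [fun s' => lemA q p hq hp n s', mul_one]
        exact hp s a


lemma collapse_ind (s : S) (F : S → ℝ) (v : S → E) :
    ∑ x : S, ((if x = s then (1:ℝ) else 0) * F x) • v x = F s • v s := by
  rw [Finset.sum_eq_single s]
  · simp
  · intro b _ hb; simp [hb]
  · simp

lemma sum_sum_smul {I J : Type*} [Fintype I] [Fintype J]
    (c : I → J → ℝ) (v : E) :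
    ∑ i : I, ∑ j : J, c i j • v = (∑ i : I, ∑ j : J, c i j) • v := by
  simp [Finset.sum_smul]

noncomputable def Gbody {n : ℕ} (j : Fin (n+1))
    (σ : Fin (n+2) → S) (α : Fin (n+1) → A) : E :=
  ((∏ t ∈ (univ : Finset (Fin (n+1))).erase j,
      (q (σ t.castSucc) (α t) * p (σ t.castSucc) (α t) (σ t.succ))) *
    p (σ j.castSucc) (α j) (σ j.succ)) • D (σ j.castSucc) (α j)

-- the summand of lemma B0
noncomputable def B0body {n : ℕ} (s : S) (j : Fin (n+1))
    (σ : Fin (n+2) → S) (α : Fin (n+1) → A) : E :=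
  ((if σ 0 = s then (1:ℝ) else 0) *
    ((∏ t ∈ (univ : Finset (Fin (n+1))).erase j,
        (q (σ t.castSucc) (α t) * p (σ t.castSucc) (α t) (σ t.succ))) *
      p (σ j.castSucc) (α j) (σ j.succ))) • D (σ j.castSucc) (α j)

lemma B0body_eq {n : ℕ} (s : S) (j : Fin (n+1)) (σ : Fin (n+2) → S) (α : Fin (n+1) → A) :
    B0body q p D s j σ α = (if σ 0 = s then (1:ℝ) else 0) • Gbody q p D j σ α := by
  simp [B0body, Gbody, smul_smul]

lemma B0body_succ_cons {n : ℕ} (s x : S) (j : Fin (n+1)) (σ' : Fin (n+2) → S)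
    (a : A) (α' : Fin (n+1) → A) :
    B0body (n := n+1) q p D s j.succ (Fin.cons x σ') (Fin.cons a α') =
      ((if x = s then (1:ℝ) else 0) * (q x a * p x a (σ' 0))) •
        Gbody q p D j σ' α' := by
  simp only [B0body, Gbody, prod_erase_succ, smul_smul, Fin.castSucc_zero, Fin.cons_zero,
    Fin.cons_succ, ← Fin.succ_castSucc]
  congr 1
  split_ifs <;> ring

lemma B0body_zero_cons {n : ℕ} (s x : S) (σ' : Fin (n+1) → S) (a : A) (α' : Fin n → A) :
    B0body q p D s 0 (Fin.cons x σ') (Fin.cons a α') =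
      ((if x = s then (1:ℝ) else 0) * (W q p σ' α' * p x a (σ' 0))) • D x a := by
  simp only [B0body]
  rw [prod_erase_zero]
  simp [W, ← Fin.succ_castSucc]

lemma lemB0 (hq : ∀ s, ∑ a, q s a = 1) (hp : ∀ s a, ∑ s', p s a s' = 1)
    (hD : ∀ s, ∑ a, D s a = 0) :
    ∀ (n : ℕ) (j : Fin (n+1)) (s : S),
      ∑ σ : Fin (n+2) → S, ∑ α : Fin (n+1) → A, B0body q p D s j σ α = 0 := by
  have base : ∀ (n : ℕ) (s : S),
      ∑ σ : Fin (n+2) → S, ∑ α : Fin (n+1) → A, B0body q p D s 0 σ α = 0 := by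
    intro n s
    rw [sum_fun_succ]
    have key : ∀ x : S, ∑ σ : Fin (n+1) → S, ∑ α : Fin (n+1) → A,
        B0body q p D s 0 (Fin.cons x σ) α = 0 := by
      intro x
      have expand : ∀ σ' : Fin (n+1) → S,
          ∑ α : Fin (n+1) → A, B0body q p D s 0 (Fin.cons x σ') α
          = ∑ a : A, ∑ α' : Fin n → A,
              ((if x = s then (1:ℝ) else 0) * (W q p σ' α' * p x a (σ' 0))) • D x a := by
        intro σ'
        rw [sum_fun_succ]
        exact Finset.sum_congr rfl fun a _ => Finset.sum_congr rfl fun α' _ =>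
          B0body_zero_cons q p D s x σ' a α'
      rw [Finset.sum_congr rfl fun σ' _ => expand σ']
      rcases eq_or_ne x s with hx | hx
      · subst hx
        simp only [eq_self_iff_true, if_true, one_mul]
        rw [Finset.sum_comm]
        have inner : ∀ a : A, ∑ σ' : Fin (n+1) → S, ∑ α' : Fin n → A,
            (W q p σ' α' * p x a (σ' 0)) • D x a = D x a := by
          intro a
          rw [sum_sum_smul]
          have h1 : (∑ σ' : Fin (n+1) → S, ∑ α' : Fin n → A,
              W q p σ' α' * p x a (σ' 0)) = 1 := by
            rw [← lemA' q p hq hp n x a]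
            exact Finset.sum_congr rfl fun σ' _ => Finset.sum_congr rfl fun α' _ =>
              mul_comm _ _
          rw [h1, one_smul]
        rw [Finset.sum_congr rfl fun a _ => inner a]
        exact hD x
      · simp [hx]
    rw [Finset.sum_congr rfl fun x _ => key x]
    simp
  intro n
  induction n with
  | zero =>
      intro j s
      have : j = 0 := Fin.fin_one_eq_zero j
      rw [this]; exact base 0 s
  | succ n ih =>
      intro j s
      refine Fin.cases ?_ ?_ j
      · exact base (n+1) s
      · intro j''
        rw [sum_fun_succ]
        have key : ∀ x : S, ∑ σ' : Fin (n+2) → S, ∑ α : Fin (n+2) → A,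
            B0body (n := n+1) q p D s (Fin.succ j'') (Fin.cons x σ') α = 0 := by
          intro x
          have expand : ∀ σ' : Fin (n+2) → S,
              ∑ α : Fin (n+2) → A,
                B0body (n := n+1) q p D s (Fin.succ j'') (Fin.cons x σ') α
              = ∑ a : A, ∑ α' : Fin (n+1) → A,
                  ((if x = s then (1:ℝ) else 0) * (q x a * p x a (σ' 0))) •
                    Gbody q p D j'' σ' α' := by
            intro σ'
            rw [sum_fun_succ]
            exact Finset.sum_congr rfl fun a _ => Finset.sum_congr rfl fun α' _ =>
              B0body_succ_cons q p D s x j'' σ' a α'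
          rw [Finset.sum_congr rfl fun σ' _ => expand σ']
          rcases eq_or_ne x s with hx | hx
          · subst hx
            simp only [eq_self_iff_true, if_true, one_mul]
            rw [Finset.sum_comm]
            have inner : ∀ a : A, ∑ σ' : Fin (n+2) → S, ∑ α' : Fin (n+1) → A,
                (q x a * p x a (σ' 0)) • Gbody q p D j'' σ' α' = 0 := by
              intro a
              have h2 : ∑ σ' : Fin (n+2) → S, ∑ α' : Fin (n+1) → A,
                  p x a (σ' 0) • Gbody q p D j'' σ' α' = 0 := by
                rw [marginal_start (f := fun s' => p x a s') (g := Gbody q p D j'')]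
                have h3 : ∀ s' : S, ∑ σ' : Fin (n+2) → S, ∑ α' : Fin (n+1) → A,
                    ((if σ' 0 = s' then (1:ℝ) else 0) * p x a s') •
                      Gbody q p D j'' σ' α' = 0 := by
                  intro s'
                  have h4 : ∀ (σ' : Fin (n+2) → S) (α' : Fin (n+1) → A),
                      ((if σ' 0 = s' then (1:ℝ) else 0) * p x a s') •
                        Gbody q p D j'' σ' α'
                      = p x a s' • B0body q p D s' j'' σ' α' := by
                    intro σ' α'
                    rw [B0body_eq, smul_smul]
                    congr 1; ring
                  rw [Finset.sum_congr rfl fun σ' _ =>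
                    Finset.sum_congr rfl fun α' _ => h4 σ' α']
                  simp only [← Finset.smul_sum]
                  rw [ih j'' s', smul_zero]
                rw [Finset.sum_congr rfl fun s' _ => h3 s']
                simp
              calc ∑ σ' : Fin (n+2) → S, ∑ α' : Fin (n+1) → A,
                    (q x a * p x a (σ' 0)) • Gbody q p D j'' σ' α'
                  = q x a • ∑ σ' : Fin (n+2) → S, ∑ α' : Fin (n+1) → A,
                      p x a (σ' 0) • Gbody q p D j'' σ' α' := by
                    simp only [Finset.smul_sum, mul_smul]
                _ = 0 := by rw [h2, smul_zero]
            rw [Finset.sum_congr rfl fun a _ => inner a]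
            simp
          · simp [hx]
        rw [Finset.sum_congr rfl fun x _ => key x]
        simp

section LB
variable (hq : ∀ s, ∑ a, q s a = 1) (hp : ∀ s a, ∑ s', p s a s' = 1)
  (hD : ∀ s, ∑ a, D s a = 0)

lemma smul_sum_sum {I J M : Type*} [Fintype I] [Fintype J] [AddCommMonoid M]
    [Module ℝ M] (c : ℝ) (g : I → J → M) :
    ∑ i : I, ∑ j : J, c • g i j = c • ∑ i : I, ∑ j : J, g i j := by
  rw [Finset.smul_sum]
  exact Finset.sum_congr rfl fun i _ => (Finset.smul_sum).symm

lemma marg_zero {M : Type*} [AddCommGroup M] [Module ℝ M] {n : ℕ}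
    (f : S → ℝ) (G : (Fin (n+1) → S) → (Fin n → A) → M)
    (h : ∀ s', ∑ σ : Fin (n+1) → S, ∑ α : Fin n → A,
      (if σ 0 = s' then (1:ℝ) else 0) • G σ α = 0) :
    ∑ σ : Fin (n+1) → S, ∑ α : Fin n → A, f (σ 0) • G σ α = 0 := by
  rw [marginal_start]
  refine Finset.sum_eq_zero fun s' _ => ?_
  have h5 : ∀ (σ : Fin (n+1) → S) (α : Fin n → A),
      ((if σ 0 = s' then (1:ℝ) else 0) * f s') • G σ α
      = f s' • ((if σ 0 = s' then (1:ℝ) else 0) • G σ α) := by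
    intro σ α; rw [smul_smul]; congr 1; ring
  rw [Finset.sum_congr rfl fun σ _ => Finset.sum_congr rfl fun α _ => h5 σ α,
    smul_sum_sum, h s', smul_zero]

include hq hp hD in
lemma lemB0' {n : ℕ} (j : Fin (n+1)) (x : S) (a : A) :
    ∑ σ : Fin (n+2) → S, ∑ α : Fin (n+1) → A,
      p x a (σ 0) • Gbody q p D j σ α = 0 := by
  refine marg_zero (fun s' => p x a s') (Gbody q p D j) fun s' => ?_
  have := lemB0 q p D hq hp hD n j s'
  rw [← this]
  refine Finset.sum_congr rfl fun σ _ => Finset.sum_congr rfl fun α _ => ?_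
  rw [B0body_eq]

noncomputable def GB (r : S → A → ℝ) {n : ℕ} (t j : Fin (n+1))
    (σ : Fin (n+2) → S) (α : Fin (n+1) → A) : E :=
  (r (σ t.castSucc) (α t) *
    ((∏ u ∈ (univ : Finset (Fin (n+1))).erase j,
        (q (σ u.castSucc) (α u) * p (σ u.castSucc) (α u) (σ u.succ))) *
      p (σ j.castSucc) (α j) (σ j.succ))) • D (σ j.castSucc) (α j)

noncomputable def Bbody (r : S → A → ℝ) {n : ℕ} (s : S) (t j : Fin (n+1))
    (σ : Fin (n+2) → S) (α : Fin (n+1) → A) : E :=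
  ((if σ 0 = s then (1:ℝ) else 0) • GB q p D r t j σ α)

lemma Bbody_zero_cons (r : S → A → ℝ) {n : ℕ} (s x : S) (j : Fin (n+1))
    (σ' : Fin (n+2) → S) (a : A) (α' : Fin (n+1) → A) :
    Bbody q p D r s 0 j.succ (Fin.cons x σ') (Fin.cons a α') =
      ((if x = s then (1:ℝ) else 0) * (r x a * (q x a * p x a (σ' 0)))) •
        Gbody q p D j σ' α' := by
  simp only [Bbody, GB, Gbody, prod_erase_succ, smul_smul, Fin.castSucc_zero,
    Fin.cons_zero, Fin.cons_succ, ← Fin.succ_castSucc]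
  congr 1
  split_ifs <;> ring

lemma Bbody_succ_cons (r : S → A → ℝ) {n : ℕ} (s x : S) (t j : Fin (n+1))
    (σ' : Fin (n+2) → S) (a : A) (α' : Fin (n+1) → A) :
    Bbody q p D r s t.succ j.succ (Fin.cons x σ') (Fin.cons a α') =
      ((if x = s then (1:ℝ) else 0) * (q x a * p x a (σ' 0))) •
        GB q p D r t j σ' α' := by
  simp only [Bbody, GB, prod_erase_succ, smul_smul, Fin.castSucc_zero,
    Fin.cons_zero, Fin.cons_succ, ← Fin.succ_castSucc]
  congr 1
  split_ifs <;> ring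

include hq hp hD in
lemma lemB (r : S → A → ℝ) :
    ∀ (n : ℕ) (j t : Fin (n+1)), t < j → ∀ s : S,
      ∑ σ : Fin (n+2) → S, ∑ α : Fin (n+1) → A,
        Bbody q p D r s t j σ α = 0 := by
  intro n
  induction n with
  | zero =>
      intro j t ht s
      rw [Fin.fin_one_eq_zero j, Fin.fin_one_eq_zero t] at ht
      exact absurd ht (lt_irrefl _)
  | succ n ih =>
      intro j t ht s
      have hj : j ≠ 0 := by
        intro h; subst h; exact Fin.not_lt_zero t ht
      obtain ⟨j'', rfl⟩ : ∃ j'', j = Fin.succ j'' := by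
        rcases Fin.eq_zero_or_eq_succ j with h | ⟨j'', rfl⟩
        · exact absurd h hj
        · exact ⟨j'', rfl⟩
      rcases Fin.eq_zero_or_eq_succ t with rfl | ⟨t'', rfl⟩
      · -- t = 0
        rw [sum_fun_succ]
        have key : ∀ x : S, ∑ σ' : Fin (n+2) → S, ∑ α : Fin (n+2) → A,
            Bbody q p D r s 0 (Fin.succ j'') (Fin.cons x σ') α = 0 := by
          intro x
          have expand : ∀ σ' : Fin (n+2) → S,
              ∑ α : Fin (n+2) → A,
                Bbody q p D r s 0 (Fin.succ j'') (Fin.cons x σ') α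
              = ∑ a : A, ∑ α' : Fin (n+1) → A,
                  ((if x = s then (1:ℝ) else 0) * (r x a * (q x a * p x a (σ' 0)))) •
                    Gbody q p D j'' σ' α' := by
            intro σ'
            rw [sum_fun_succ]
            exact Finset.sum_congr rfl fun a _ => Finset.sum_congr rfl fun α' _ =>
              Bbody_zero_cons q p D r s x j'' σ' a α'
          rw [Finset.sum_congr rfl fun σ' _ => expand σ']
          rcases eq_or_ne x s with hx | hx
          · subst hx
            simp only [eq_self_iff_true, if_true, one_mul]
            rw [Finset.sum_comm]
            have inner : ∀ a : A, ∑ σ' : Fin (n+2) → S, ∑ α' : Fin (n+1) → A,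
                (r x a * (q x a * p x a (σ' 0))) • Gbody q p D j'' σ' α' = 0 := by
              intro a
              have h5 : ∀ (σ' : Fin (n+2) → S) (α' : Fin (n+1) → A),
                  (r x a * (q x a * p x a (σ' 0))) • Gbody q p D j'' σ' α'
                  = (r x a * q x a) • (p x a (σ' 0) • Gbody q p D j'' σ' α') := by
                intro σ' α'; rw [smul_smul]; congr 1; ring
              rw [Finset.sum_congr rfl fun σ' _ =>
                Finset.sum_congr rfl fun α' _ => h5 σ' α']
              rw [smul_sum_sum, lemB0' q p D hq hp hD j'' x a, smul_zero]
            rw [Finset.sum_congr rfl fun a _ => inner a]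
            simp
          · simp [hx]
        rw [Finset.sum_congr rfl fun x _ => key x]
        simp
      · -- t = t''.succ
        have ht'' : t'' < j'' := by
          simpa [Fin.succ_lt_succ_iff] using ht
        rw [sum_fun_succ]
        have key : ∀ x : S, ∑ σ' : Fin (n+2) → S, ∑ α : Fin (n+2) → A,
            Bbody q p D r s (Fin.succ t'') (Fin.succ j'') (Fin.cons x σ') α = 0 := by
          intro x
          have expand : ∀ σ' : Fin (n+2) → S,
              ∑ α : Fin (n+2) → A,
                Bbody q p D r s (Fin.succ t'') (Fin.succ j'') (Fin.cons x σ') α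
              = ∑ a : A, ∑ α' : Fin (n+1) → A,
                  ((if x = s then (1:ℝ) else 0) * (q x a * p x a (σ' 0))) •
                    GB q p D r t'' j'' σ' α' := by
            intro σ'
            rw [sum_fun_succ]
            exact Finset.sum_congr rfl fun a _ => Finset.sum_congr rfl fun α' _ =>
              Bbody_succ_cons q p D r s x t'' j'' σ' a α'
          rw [Finset.sum_congr rfl fun σ' _ => expand σ']
          rcases eq_or_ne x s with hx | hx
          · subst hx
            simp only [eq_self_iff_true, if_true, one_mul]
            rw [Finset.sum_comm]
            have h2 : ∀ a : A, ∑ σ' : Fin (n+2) → S, ∑ α' : Fin (n+1) → A,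
                p x a (σ' 0) • GB q p D r t'' j'' σ' α' = 0 := by
              intro a
              refine marg_zero (fun s' => p x a s') (GB q p D r t'' j'') fun s' => ?_
              simpa [Bbody] using ih j'' t'' ht'' s'
            have inner : ∀ a : A, ∑ σ' : Fin (n+2) → S, ∑ α' : Fin (n+1) → A,
                (q x a * p x a (σ' 0)) • GB q p D r t'' j'' σ' α' = 0 := by
              intro a
              have h5 : ∀ (σ' : Fin (n+2) → S) (α' : Fin (n+1) → A),
                  (q x a * p x a (σ' 0)) • GB q p D r t'' j'' σ' α'
                  = q x a • (p x a (σ' 0) • GB q p D r t'' j'' σ' α') := by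
                intro σ' α'; rw [smul_smul]
              rw [Finset.sum_congr rfl fun σ' _ =>
                Finset.sum_congr rfl fun α' _ => h5 σ' α']
              rw [smul_sum_sum, h2 a, smul_zero]
            rw [Finset.sum_congr rfl fun a _ => inner a]
            simp
          · simp [hx]
        rw [Finset.sum_congr rfl fun x _ => key x]
        simp
end LB

end PG

set_option maxHeartbeats 2000000 in
/-- Finite-horizon policy gradient theorem: for a finite MDP with horizon `T`,
deterministic initial state `s₁`, transition kernel `p`, deterministic reward
`r` and a differentiable positive policy `pol`, the gradient of the expected
total reward `J` equals the expectation over trajectories of the sum over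
timesteps of the reward-to-go times the score function.  A trajectory is a
pair `(σ, α)` of a state sequence `σ : Fin (T+1) → S` (with `σ 0` forced to be
`s₁` by the indicator in the trajectory probability `P`) and an action
sequence `α : Fin T → A`. -/
theorem finite_horizon_policy_gradient
    {S A : Type*} [Fintype S] [Fintype A] [Nonempty S] [Nonempty A]
    [DecidableEq S] {k : ℕ} (T : ℕ) (hT : 1 ≤ T) (s₁ : S)
    (p : S → A → S → ℝ)
    (hp_nonneg : ∀ s a s', 0 ≤ p s a s') (hp_sum : ∀ s a, ∑ s', p s a s' = 1)
    (r : S → A → ℝ)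
    (pol : EuclideanSpace ℝ (Fin k) → S → A → ℝ) (θ₀ : EuclideanSpace ℝ (Fin k))
    (hpol_pos : ∀ θ s a, 0 < pol θ s a)
    (hpol_sum : ∀ θ s, ∑ a, pol θ s a = 1)
    (hpol_diff : ∀ s a, DifferentiableAt ℝ (fun θ => pol θ s a) θ₀)
    (P : EuclideanSpace ℝ (Fin k) → (Fin (T + 1) → S) → (Fin T → A) → ℝ)
    (hP : ∀ θ σ α, P θ σ α = (if σ 0 = s₁ then (1 : ℝ) else 0) *
      ∏ t : Fin T, (pol θ (σ t.castSucc) (α t) * p (σ t.castSucc) (α t) (σ t.succ)))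
    (J : EuclideanSpace ℝ (Fin k) → ℝ)
    (hJ : ∀ θ, J θ = ∑ σ : Fin (T + 1) → S, ∑ α : Fin T → A,
      P θ σ α * ∑ t : Fin T, r (σ t.castSucc) (α t)) :
    gradient J θ₀ = ∑ σ : Fin (T + 1) → S, ∑ α : Fin T → A,
      P θ₀ σ α • ∑ j : Fin T,
        (∑ t ∈ Finset.Ici j, r (σ t.castSucc) (α t)) •
          gradient (fun θ => log (pol θ (σ j.castSucc) (α j))) θ₀ := by
  obtain ⟨n, rfl⟩ : ∃ n, T = n + 1 := ⟨T - 1, (Nat.succ_pred_eq_of_pos hT).symm⟩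
  classical
  set D : S → A → (EuclideanSpace ℝ (Fin k)) →L[ℝ] ℝ :=
    fun s a => fderiv ℝ (fun θ => pol θ s a) θ₀ with hDdef
  have hDf : ∀ s a, HasFDerivAt (fun θ => pol θ s a) (D s a) θ₀ :=
    fun s a => (hpol_diff s a).hasFDerivAt
  have hq : ∀ s, ∑ a, pol θ₀ s a = 1 := fun s => hpol_sum θ₀ s
  have hqne : ∀ s a, pol θ₀ s a ≠ 0 := fun s a => ne_of_gt (hpol_pos θ₀ s a)
  have hD : ∀ s, ∑ a, D s a = 0 := by
    intro s
    have h1 : HasFDerivAt (fun θ => ∑ a : A, pol θ s a) (∑ a : A, D s a) θ₀ :=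
      HasFDerivAt.fun_sum fun a _ => hDf s a
    have h2 : (fun θ : EuclideanSpace ℝ (Fin k) => ∑ a : A, pol θ s a)
        = fun _ => (1:ℝ) := funext fun θ => hpol_sum θ s
    rw [h2] at h1
    exact h1.unique (hasFDerivAt_const 1 θ₀)
  have hJder : HasFDerivAt J
      (∑ σ : Fin (n+1+1) → S, ∑ α : Fin (n+1) → A,
        ((if σ 0 = s₁ then (1:ℝ) else 0) * ∑ t : Fin (n+1), r (σ t.castSucc) (α t)) •
          ∑ j : Fin (n+1),
            (∏ t ∈ (univ : Finset (Fin (n+1))).erase j,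
              (pol θ₀ (σ t.castSucc) (α t) * p (σ t.castSucc) (α t) (σ t.succ))) •
              (p (σ j.castSucc) (α j) (σ j.succ) • D (σ j.castSucc) (α j))) θ₀ := by
    have hfun : J = fun θ => ∑ σ : Fin (n+1+1) → S, ∑ α : Fin (n+1) → A,
        ((if σ 0 = s₁ then (1:ℝ) else 0) * ∑ t : Fin (n+1), r (σ t.castSucc) (α t)) *
          ∏ t : Fin (n+1),
            (pol θ (σ t.castSucc) (α t) * p (σ t.castSucc) (α t) (σ t.succ)) := by
      funext θ
      rw [hJ θ]
      refine Finset.sum_congr rfl fun σ _ => Finset.sum_congr rfl fun α _ => ?_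
      rw [hP θ σ α]; ring
    rw [hfun]
    refine HasFDerivAt.fun_sum fun σ _ => ?_
    refine HasFDerivAt.fun_sum fun α _ => ?_
    exact HasFDerivAt.const_mul
      (HasFDerivAt.finset_prod fun t _ => (hDf _ _).mul_const _) _
  unfold gradient
  rw [hJder.fderiv]
  have hlog : ∀ s a, fderiv ℝ (fun θ => Real.log (pol θ s a)) θ₀
      = (pol θ₀ s a)⁻¹ • D s a :=
    fun s a => ((hDf s a).log (hqne s a)).fderiv
  simp only [hlog]
  simp only [← map_smul, ← map_sum]
  congr 1
  -- now an identity in the dual space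
  have hLHS : ∀ (σ : Fin (n+1+1) → S) (α : Fin (n+1) → A),
      ((if σ 0 = s₁ then (1:ℝ) else 0) * ∑ t : Fin (n+1), r (σ t.castSucc) (α t)) •
        ∑ j : Fin (n+1),
          (∏ t ∈ (univ : Finset (Fin (n+1))).erase j,
            (pol θ₀ (σ t.castSucc) (α t) * p (σ t.castSucc) (α t) (σ t.succ))) •
            (p (σ j.castSucc) (α j) (σ j.succ) • D (σ j.castSucc) (α j))
      = (∑ j : Fin (n+1),
          ((if σ 0 = s₁ then (1:ℝ) else 0) *
            ((∑ t ∈ Finset.Ici j, r (σ t.castSucc) (α t)) *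
              ((∏ t ∈ (univ : Finset (Fin (n+1))).erase j,
                (pol θ₀ (σ t.castSucc) (α t) * p (σ t.castSucc) (α t) (σ t.succ))) *
               p (σ j.castSucc) (α j) (σ j.succ)))) • D (σ j.castSucc) (α j))
        + ∑ j : Fin (n+1), ∑ t ∈ Finset.Iio j,
            Bbody (pol θ₀) p D r s₁ t j σ α := by
    intro σ α
    rw [Finset.smul_sum, ← Finset.sum_add_distrib]
    refine Finset.sum_congr rfl fun j _ => ?_
    have hsplit : (∑ t : Fin (n+1), r (σ t.castSucc) (α t))
        = (∑ t ∈ Finset.Ici j, r (σ t.castSucc) (α t))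
          + ∑ t ∈ Finset.Iio j, r (σ t.castSucc) (α t) := by
      rw [← Finset.sum_union (by
        simp only [Finset.disjoint_left, Finset.mem_Ici, Finset.mem_Iio]
        exact fun t h => not_lt.mpr h)]
      apply Finset.sum_congr _ fun _ _ => rfl
      ext t
      simp [le_or_gt j t]
    have hB : ∑ t ∈ Finset.Iio j, Bbody (pol θ₀) p D r s₁ t j σ α
        = ((if σ 0 = s₁ then (1:ℝ) else 0) *
            ((∑ t ∈ Finset.Iio j, r (σ t.castSucc) (α t)) *
              ((∏ t ∈ (univ : Finset (Fin (n+1))).erase j,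
                (pol θ₀ (σ t.castSucc) (α t) * p (σ t.castSucc) (α t) (σ t.succ))) *
               p (σ j.castSucc) (α j) (σ j.succ)))) • D (σ j.castSucc) (α j) := by
      have hb : ∀ t : Fin (n+1), Bbody (pol θ₀) p D r s₁ t j σ α
          = ((if σ 0 = s₁ then (1:ℝ) else 0) *
              (r (σ t.castSucc) (α t) *
                ((∏ t ∈ (univ : Finset (Fin (n+1))).erase j,
                  (pol θ₀ (σ t.castSucc) (α t) * p (σ t.castSucc) (α t) (σ t.succ))) *
                 p (σ j.castSucc) (α j) (σ j.succ)))) • D (σ j.castSucc) (α j) := by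
        intro t
        simp only [Bbody, GB, smul_smul]
      rw [Finset.sum_congr rfl fun t _ => hb t, ← Finset.sum_smul]
      congr 1
      rw [Finset.sum_mul, Finset.mul_sum]
    rw [hsplit, hB, smul_smul, smul_smul, ← add_smul]
    congr 1
    ring
  rw [Finset.sum_congr rfl fun σ _ => Finset.sum_congr rfl fun α _ => hLHS σ α]
  simp only [Finset.sum_add_distrib]
  have hA2 : ∑ σ : Fin (n+1+1) → S, ∑ α : Fin (n+1) → A, ∑ j : Fin (n+1),
      ∑ t ∈ Finset.Iio j, Bbody (pol θ₀) p D r s₁ t j σ α = 0 := by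
    calc ∑ σ : Fin (n+1+1) → S, ∑ α : Fin (n+1) → A, ∑ j : Fin (n+1),
          ∑ t ∈ Finset.Iio j, Bbody (pol θ₀) p D r s₁ t j σ α
        = ∑ j : Fin (n+1), ∑ σ : Fin (n+1+1) → S, ∑ α : Fin (n+1) → A,
            ∑ t ∈ Finset.Iio j, Bbody (pol θ₀) p D r s₁ t j σ α := by
          rw [Finset.sum_congr rfl fun σ _ => Finset.sum_comm]
          exact Finset.sum_comm
      _ = 0 := by
          refine Finset.sum_eq_zero fun j _ => ?_
          have hswap : ∀ σ : Fin (n+1+1) → S,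
              ∑ α : Fin (n+1) → A, ∑ t ∈ Finset.Iio j,
                Bbody (pol θ₀) p D r s₁ t j σ α
              = ∑ t ∈ Finset.Iio j, ∑ α : Fin (n+1) → A,
                Bbody (pol θ₀) p D r s₁ t j σ α := fun σ => Finset.sum_comm
          rw [Finset.sum_congr rfl fun σ _ => hswap σ, Finset.sum_comm]
          refine Finset.sum_eq_zero fun t ht => ?_
          exact lemB (pol θ₀) p D hq hp_sum hD r n j t (Finset.mem_Iio.mp ht) s₁
  rw [hA2, add_zero]
  refine Finset.sum_congr rfl fun σ _ => Finset.sum_congr rfl fun α _ => ?_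
  rw [hP θ₀ σ α, Finset.smul_sum]
  refine Finset.sum_congr rfl fun j _ => ?_
  rw [smul_smul, smul_smul]
  congr 1
  rw [← Finset.mul_prod_erase univ _ (Finset.mem_univ j)]
  field_simp [hqne (σ j.castSucc) (α j)]
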